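/- Let k be an algebraically closed field, n ≥ 1, and m ≥ 1 an integer that is invertible in k (i.e., the characteristic of k does not divide m). Let T ≤ GL_n(k) be the subgroup of invertible diagonal matrices, and let GL_n(k)/T denote the set of left cosets xT. Let g ∈ GL_n(k) be regular semisimple, i.e., the characteristic polynomial of g has n distinct roots in k. Then the set {(t, xT) ∈ T × GL_n(k)/T : x⁻¹·g·x = t^m} is finite with exactly n!·m^n elements. (The condition x⁻¹gx = t^m is independent of the choice of coset representative x, since T is commutative.) -/

import Mathlib

open Matrix

variable (R : Type*) [CommRing R] (n : ℕ)

/-- The subgroup of `GL n R` of invertible upper triangular matrices. -/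
def upperTriangularSubgroup : Subgroup (GL (Fin n) R) where
  carrier := {g | ((g : Matrix (Fin n) (Fin n) R)).BlockTriangular id}
  one_mem' := Matrix.blockTriangular_one
  mul_mem' := by
    intro g h hg hh
    exact hg.mul hh
  inv_mem' := by
    intro g hg
    show ((g⁻¹ : GL (Fin n) R) : Matrix (Fin n) (Fin n) R).BlockTriangular id
    rw [Matrix.coe_units_inv]
    letI := g.invertible
    exact Matrix.blockTriangular_inv_of_blockTriangular hg

/-- The subgroup of `GL n R` of invertible diagonal matrices. -/
def diagonalSubgroup : Subgroup (GL (Fin n) R) where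
  carrier := {g | ∀ i j : Fin n, i ≠ j → (g : Matrix (Fin n) (Fin n) R) i j = 0}
  one_mem' := fun i j hij => Matrix.one_apply_ne hij
  mul_mem' := by
    intro g h hg hh i j hij
    show ∑ l, (g : Matrix (Fin n) (Fin n) R) i l * (h : Matrix (Fin n) (Fin n) R) l j = 0
    refine Finset.sum_eq_zero fun l _ => ?_
    rcases eq_or_ne i l with rfl | hil
    · rw [hh i j hij, mul_zero]
    · rw [hg i l hil, zero_mul]
  inv_mem' := by
    intro g hg i j hij
    letI := g.invertible
    have hupper : ((g : Matrix (Fin n) (Fin n) R)).BlockTriangular (id : Fin n → Fin n) :=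
      fun i j hij => hg i j (by exact fun h => absurd h.symm (ne_of_lt hij))
    have hlower : ((g : Matrix (Fin n) (Fin n) R)).BlockTriangular
        (fun i : Fin n => OrderDual.toDual i) := fun a b hab =>
      hg a b (ne_of_lt (OrderDual.toDual_lt_toDual.mp hab))
    have h1 := Matrix.blockTriangular_inv_of_blockTriangular hupper
    have h2 := Matrix.blockTriangular_inv_of_blockTriangular hlower
    show ((g⁻¹ : GL (Fin n) R) : Matrix (Fin n) (Fin n) R) i j = 0
    rw [Matrix.coe_units_inv]
    rcases lt_or_gt_of_ne hij with h | h
    · exact h2 (OrderDual.toDual_lt_toDual.mpr h)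
    · exact h1 h

section AuxLemmas
open Polynomial

variable {k : Type*} [Field k]

lemma aux_charpoly_diagonal {n : ℕ} (d : Fin n → k) :
    Matrix.charpoly (Matrix.diagonal d) = ∏ i, (X - C (d i)) := by
  have h : Matrix.charmatrix (Matrix.diagonal d)
      = Matrix.diagonal (fun i => (X : k[X]) - C (d i)) := by
    ext i j
    rcases eq_or_ne i j with rfl | hij
    · simp
    · simp [Matrix.charmatrix_apply_ne _ _ _ hij, Matrix.diagonal_apply_ne _ hij]
  rw [Matrix.charpoly, h, Matrix.det_diagonal]

lemma aux_charpoly_conj {n : ℕ} (u : GL (Fin n) k) (A : Matrix (Fin n) (Fin n) k) :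
    Matrix.charpoly (((u⁻¹ : GL (Fin n) k) : Matrix (Fin n) (Fin n) k) * A *
      ((u : GL (Fin n) k) : Matrix (Fin n) (Fin n) k)) = Matrix.charpoly A := by
  let f : Matrix (Fin n) (Fin n) k →+* Matrix (Fin n) (Fin n) k[X] := (C : k →+* k[X]).mapMatrix
  have hc : Matrix.charmatrix (((u⁻¹ : GL (Fin n) k) : Matrix (Fin n) (Fin n) k) * A * (u : Matrix (Fin n) (Fin n) k))
      = f ((u⁻¹ : GL (Fin n) k) : Matrix (Fin n) (Fin n) k) * Matrix.charmatrix A * f (u : Matrix (Fin n) (Fin n) k) := by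
    unfold Matrix.charmatrix
    rw [mul_sub, sub_mul, _root_.map_mul, _root_.map_mul]
    congr 1
    have h1 : f ((u⁻¹ : GL (Fin n) k) : Matrix (Fin n) (Fin n) k) * Matrix.scalar (Fin n) (X : k[X])
        = Matrix.scalar (Fin n) (X : k[X]) * f ((u⁻¹ : GL (Fin n) k) : Matrix (Fin n) (Fin n) k) :=
      (Matrix.scalar_commute (X : k[X]) (fun r => Commute.all _ r) _).symm
    rw [h1, mul_assoc, ← _root_.map_mul]
    have h2 : ((u⁻¹ : GL (Fin n) k) : Matrix (Fin n) (Fin n) k) * (u : Matrix (Fin n) (Fin n) k) = 1 := by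
      rw [← Units.val_mul, inv_mul_cancel, Units.val_one]
    rw [h2, _root_.map_one, mul_one]
  rw [Matrix.charpoly, hc, Matrix.det_mul, Matrix.det_mul, Matrix.charpoly]
  have h3 : (f ((u⁻¹ : GL (Fin n) k) : Matrix (Fin n) (Fin n) k)).det * (f (u : Matrix (Fin n) (Fin n) k)).det = 1 := by
    rw [← Matrix.det_mul, ← _root_.map_mul]
    have h2 : ((u⁻¹ : GL (Fin n) k) : Matrix (Fin n) (Fin n) k) * (u : Matrix (Fin n) (Fin n) k) = 1 := by
      rw [← Units.val_mul, inv_mul_cancel, Units.val_one]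
    rw [h2, _root_.map_one, Matrix.det_one]
  calc (f ((u⁻¹ : GL (Fin n) k) : Matrix (Fin n) (Fin n) k)).det * (Matrix.charmatrix A).det * (f (u : Matrix (Fin n) (Fin n) k)).det
      = (Matrix.charmatrix A).det * ((f ((u⁻¹ : GL (Fin n) k) : Matrix (Fin n) (Fin n) k)).det * (f (u : Matrix (Fin n) (Fin n) k)).det) := by ring
    _ = (Matrix.charmatrix A).det := by rw [h3, mul_one]

lemma aux_eval_charpoly {n : ℕ} (A : Matrix (Fin n) (Fin n) k) (a : k) :
    (Matrix.charpoly A).eval a = (Matrix.scalar (Fin n) a - A).det := by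
  rw [Matrix.charpoly, _root_.eval_det, Matrix.matPolyEquiv_charmatrix]
  rw [Polynomial.eval_sub, Polynomial.eval_X, Polynomial.eval_C]

lemma aux_card_roots {k : Type*} [Field k] [IsAlgClosed k] {m : ℕ} (hm : 1 ≤ m)
    (hminv : (m : k) ≠ 0) {a : k} (ha : a ≠ 0) :
    Nat.card {c : k // c ^ m = a} = m := by
  classical
  have hp : (X ^ m - C a : k[X]).Monic := monic_X_pow_sub_C a (by omega)
  have hp0 : (X ^ m - C a : k[X]) ≠ 0 := hp.ne_zero
  have hsep : (X ^ m - C a : k[X]).Separable := separable_X_pow_sub_C a hminv ha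
  have hnd : (X ^ m - C a : k[X]).roots.Nodup := nodup_roots hsep
  have hcard : Multiset.card (X ^ m - C a : k[X]).roots = m := by
    have := (splits_iff_card_roots (f := (X ^ m - C a : k[X]))).mp
      (IsAlgClosed.splits _)
    rwa [natDegree_X_pow_sub_C] at this
  have he : {c : k // c ^ m = a} ≃ {c : k // c ∈ (X ^ m - C a : k[X]).roots.toFinset} :=
    Equiv.subtypeEquivRight (fun c => by
      rw [Multiset.mem_toFinset, mem_roots hp0]
      simp [IsRoot, sub_eq_zero])
  rw [Nat.card_congr he, Nat.card_eq_finsetCard, Multiset.toFinset_card_of_nodup hnd, hcard]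

lemma aux_nat_card_sigma {ι : Type*} [Fintype ι] (f : ι → Type*) [∀ i, Finite (f i)] :
    Nat.card ((i : ι) × f i) = ∑ i, Nat.card (f i) := by
  letI : ∀ i, Fintype (f i) := fun i => Fintype.ofFinite _
  simp [Nat.card_eq_fintype_card]

lemma aux_centralizer {n : ℕ} {d : Fin n → k} (hd : Function.Injective d)
    {z : Matrix (Fin n) (Fin n) k} (hz : z * Matrix.diagonal d = Matrix.diagonal d * z)
    {i j : Fin n} (hij : i ≠ j) : z i j = 0 := by
  have h := congrFun (congrFun hz i) j
  rw [Matrix.mul_diagonal, Matrix.diagonal_mul] at h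
  have h2 : z i j * (d j - d i) = 0 := by linear_combination h
  rcases mul_eq_zero.mp h2 with h3 | h3
  · exact h3
  · exact absurd (hd (sub_eq_zero.mp h3)) hij.symm

end AuxLemmas

open Polynomial in
/-- over an algebraically closed field `k`, for `m ≥ 1` invertible in `k`
and a regular semisimple `g ∈ GL_n(k)` (characteristic polynomial with `n` distinct roots),
the set `{(t, xT) ∈ T × GL_n(k)/T : x⁻¹gx = tᵐ}` has exactly `n!·mⁿ` elements, where `T` is
the diagonal subgroup. -/
theorem card_torus_mth_roots_fiber (k : Type*) [Field k] [IsAlgClosed k]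
    (n m : ℕ) (hn : 1 ≤ n) (hm : 1 ≤ m) (hminv : (m : k) ≠ 0)
    (g : GL (Fin n) k)
    (hreg : ∃ μ : Fin n → k, Function.Injective μ ∧
      Matrix.charpoly (g : Matrix (Fin n) (Fin n) k) = ∏ i : Fin n, (X - C (μ i))) :
    Nat.card {p : diagonalSubgroup k n × (GL (Fin n) k ⧸ diagonalSubgroup k n) //
        ∃ x : GL (Fin n) k, (x : GL (Fin n) k ⧸ diagonalSubgroup k n) = p.2 ∧
          x⁻¹ * g * x = (p.1 : GL (Fin n) k) ^ m} =
      Nat.factorial n * m ^ n := by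
  classical
  obtain ⟨μ, hμ, hchar⟩ := hreg
  -- eigenvectors
  have heig : ∀ i : Fin n, ∃ v : Fin n → k, v ≠ 0 ∧
      (g : Matrix (Fin n) (Fin n) k) *ᵥ v = μ i • v := by
    intro i
    have hdet : (Matrix.scalar (Fin n) (μ i) - (g : Matrix (Fin n) (Fin n) k)).det = 0 := by
      have h1 := aux_eval_charpoly (g : Matrix (Fin n) (Fin n) k) (μ i)
      rw [hchar, Polynomial.eval_prod] at h1
      rw [← h1]
      exact Finset.prod_eq_zero (Finset.mem_univ i) (by simp)
    obtain ⟨v, hv0, hv⟩ := Matrix.exists_mulVec_eq_zero_iff.mpr hdet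
    refine ⟨v, hv0, ?_⟩
    rw [Matrix.sub_mulVec] at hv
    have h2 : Matrix.scalar (Fin n) (μ i) *ᵥ v = μ i • v := by
      funext j; rw [Matrix.scalar_apply, Matrix.mulVec_diagonal]; rfl
    rw [h2] at hv
    exact (sub_eq_zero.mp hv).symm
  choose v hv0 hgv using heig
  have hμ0 : ∀ i, μ i ≠ 0 := by
    intro i h0
    apply hv0 i
    have h1 : (g : Matrix (Fin n) (Fin n) k) *ᵥ v i = 0 := by rw [hgv i, h0, zero_smul]
    have h2 : v i = ((g⁻¹ : GL (Fin n) k) : Matrix (Fin n) (Fin n) k) *ᵥ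
        ((g : Matrix (Fin n) (Fin n) k) *ᵥ v i) := by
      rw [Matrix.mulVec_mulVec, ← Units.val_mul, inv_mul_cancel, Units.val_one,
        Matrix.one_mulVec]
    rw [h2, h1, Matrix.mulVec_zero]
  have hli : LinearIndependent k v := by
    apply Module.End.eigenvectors_linearIndependent'
      (Matrix.mulVecLin (g : Matrix (Fin n) (Fin n) k)) μ hμ
    intro i
    refine ⟨Module.End.mem_eigenspace_iff.mpr ?_, hv0 i⟩
    rw [Matrix.mulVecLin_apply]
    exact hgv i
  -- eigenvector matrices indexed by permutations
  let M : Equiv.Perm (Fin n) → Matrix (Fin n) (Fin n) k :=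
    fun σ => Matrix.of fun i j => v (σ j) i
  have hMunit : ∀ σ, IsUnit (M σ) := by
    intro σ
    rw [← Matrix.linearIndependent_cols_iff_isUnit]
    have h : (M σ).col = fun j => v (σ j) := by
      funext j; funext i; rfl
    rw [h]
    exact hli.comp σ σ.injective
  have hMg : ∀ σ, (g : Matrix (Fin n) (Fin n) k) * M σ
      = M σ * Matrix.diagonal (fun i => μ (σ i)) := by
    intro σ
    ext i j
    have h1 := congrFun (hgv (σ j)) i
    simp only [Matrix.mulVec, dotProduct, Pi.smul_apply, smul_eq_mul] at h1
    rw [Matrix.mul_apply, Matrix.mul_diagonal]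
    show (∑ x, (g : Matrix (Fin n) (Fin n) k) i x * v (σ j) x) = v (σ j) i * μ (σ j)
    rw [h1, mul_comm]
  let xu : Equiv.Perm (Fin n) → GL (Fin n) k := fun σ => (hMunit σ).unit
  have hxu : ∀ σ, ((xu σ : GL (Fin n) k) : Matrix (Fin n) (Fin n) k) = M σ :=
    fun σ => (hMunit σ).unit_spec
  have hconjm : ∀ σ, (((xu σ)⁻¹ * g * xu σ : GL (Fin n) k) : Matrix (Fin n) (Fin n) k)
      = Matrix.diagonal (fun i => μ (σ i)) := by
    intro σ
    have hinv : (((xu σ)⁻¹ : GL (Fin n) k) : Matrix (Fin n) (Fin n) k) = (M σ)⁻¹ := by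
      rw [← hxu σ]; exact Matrix.coe_units_inv (xu σ)
    calc (((xu σ)⁻¹ * g * xu σ : GL (Fin n) k) : Matrix (Fin n) (Fin n) k)
        = (M σ)⁻¹ * ((g : Matrix (Fin n) (Fin n) k) * M σ) := by
          rw [Units.val_mul, Units.val_mul, hinv, hxu σ, mul_assoc]
      _ = (M σ)⁻¹ * (M σ * Matrix.diagonal (fun i => μ (σ i))) := by rw [hMg σ]
      _ = Matrix.diagonal (fun i => μ (σ i)) := by
          rw [← mul_assoc, Matrix.nonsing_inv_mul _ (((Matrix.isUnit_iff_isUnit_det (M σ)).mp (hMunit σ))),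
            one_mul]
  -- units from nonvanishing diagonal vectors
  have hdiagunit : ∀ r : Fin n → k, (∀ i, r i ≠ 0) → IsUnit (Matrix.diagonal r) := by
    intro r hr
    rw [Matrix.isUnit_diagonal]
    exact IsUnit.of_mul_eq_one (fun i => (r i)⁻¹)
      (by funext i; exact mul_inv_cancel₀ (hr i))
  have hTmem : ∀ (u : GL (Fin n) k) (r : Fin n → k),
      ((u : GL (Fin n) k) : Matrix (Fin n) (Fin n) k) = Matrix.diagonal r →
      u ∈ diagonalSubgroup k n := by
    intro u r hu
    show ∀ i j : Fin n, i ≠ j → (u : Matrix (Fin n) (Fin n) k) i j = 0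
    intro i j hij
    rw [hu]
    exact Matrix.diagonal_apply_ne r hij
  -- the domain of our bijection
  have hrne : ∀ (σ : Equiv.Perm (Fin n)) (r : (i : Fin n) → {c : k // c ^ m = μ (σ i)}) (i : Fin n),
      ((r i : k)) ≠ 0 := by
    intro σ r i h0
    have := (r i).2
    rw [h0, zero_pow (by omega : m ≠ 0)] at this
    exact hμ0 (σ i) this.symm
  let tmat : (σ : Equiv.Perm (Fin n)) → ((i : Fin n) → {c : k // c ^ m = μ (σ i)}) →
      Matrix (Fin n) (Fin n) k := fun σ r => Matrix.diagonal (fun i => (r i : k))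
  let tu : (σ : Equiv.Perm (Fin n)) → ((i : Fin n) → {c : k // c ^ m = μ (σ i)}) →
      GL (Fin n) k := fun σ r => (hdiagunit _ (hrne σ r)).unit
  have htu : ∀ σ r, ((tu σ r : GL (Fin n) k) : Matrix (Fin n) (Fin n) k) = tmat σ r :=
    fun σ r => (hdiagunit _ (hrne σ r)).unit_spec
  have htupow : ∀ σ r, (((tu σ r) ^ m : GL (Fin n) k) : Matrix (Fin n) (Fin n) k)
      = Matrix.diagonal (fun i => μ (σ i)) := by
    intro σ r
    rw [Units.val_pow_eq_pow_val, htu σ r]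
    show (Matrix.diagonal (fun i => (r i : k))) ^ m = _
    rw [Matrix.diagonal_pow]
    have h : ((fun i => (r i : k)) ^ m) = fun i => μ (σ i) := by
      funext i
      show (r i : k) ^ m = μ (σ i)
      exact (r i).2
    rw [h]
  have hcond : ∀ σ r, (xu σ)⁻¹ * g * xu σ = (tu σ r) ^ m := by
    intro σ r
    apply Units.ext
    rw [hconjm σ, htupow σ r]
  let F : ((σ : Equiv.Perm (Fin n)) × ((i : Fin n) → {c : k // c ^ m = μ (σ i)})) →
      {p : diagonalSubgroup k n × (GL (Fin n) k ⧸ diagonalSubgroup k n) //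
        ∃ x : GL (Fin n) k, (x : GL (Fin n) k ⧸ diagonalSubgroup k n) = p.2 ∧
          x⁻¹ * g * x = (p.1 : GL (Fin n) k) ^ m} :=
    fun q => ⟨(⟨tu q.1 q.2, hTmem _ _ (htu q.1 q.2)⟩,
        ((xu q.1 : GL (Fin n) k) : GL (Fin n) k ⧸ diagonalSubgroup k n)),
      xu q.1, rfl, hcond q.1 q.2⟩
  have hFinj : Function.Injective F := by
    rintro ⟨σ, r⟩ ⟨σ', r'⟩ h
    have h1 : tu σ r = tu σ' r' := by
      have := congrArg (fun s => ((s.1.1 : GL (Fin n) k))) (Subtype.ext_iff.mp h)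
      exact this
    have h2 : tmat σ r = tmat σ' r' := by
      rw [← htu σ r, ← htu σ' r', h1]
    have hr : ∀ i : Fin n, (r i : k) = (r' i : k) := by
      intro i
      have := congrFun (congrFun h2 i) i
      simpa [tmat] using this
    have hσ : σ = σ' := by
      apply Equiv.ext
      intro i
      apply hμ
      rw [← (r i).2, ← (r' i).2, hr i]
    subst hσ
    congr 1
    funext i
    exact Subtype.ext (hr i)
  have hFsurj : Function.Surjective F := by
    rintro ⟨⟨t, c⟩, x, hx, hcx⟩
    replace hx : (x : GL (Fin n) k ⧸ diagonalSubgroup k n) = c := hx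
    replace hcx : x⁻¹ * g * x = (t : GL (Fin n) k) ^ m := hcx
    -- the matrix of t is diagonal
    set Td : Matrix (Fin n) (Fin n) k := ((t : GL (Fin n) k) : Matrix (Fin n) (Fin n) k) with hTd
    have htdiag : Td = Matrix.diagonal (fun i => Td i i) := by
      ext i j
      rcases eq_or_ne i j with rfl | hij
      · rw [Matrix.diagonal_apply_eq]
      · rw [Matrix.diagonal_apply_ne _ hij]
        exact t.2 i j hij
    set d : Fin n → k := fun i => Td i i with hd
    -- the conjugate of g by x is diagonal with entries d i ^ m
    have hxgx : ((x⁻¹ * g * x : GL (Fin n) k) : Matrix (Fin n) (Fin n) k)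
        = Matrix.diagonal (fun i => d i ^ m) := by
      rw [hcx]
      show (((t : GL (Fin n) k)) ^ m : GL (Fin n) k).val = _
      rw [Units.val_pow_eq_pow_val, ← hTd, htdiag, Matrix.diagonal_pow]
      congr 1
    -- charpoly comparison
    have hcp : (∏ i : Fin n, (X - C (d i ^ m))) = ∏ i : Fin n, (X - C (μ i)) := by
      have h1 := aux_charpoly_conj x (g : Matrix (Fin n) (Fin n) k)
      have h2 : ((x⁻¹ * g * x : GL (Fin n) k) : Matrix (Fin n) (Fin n) k)
          = ((x⁻¹ : GL (Fin n) k) : Matrix (Fin n) (Fin n) k) * (g : Matrix (Fin n) (Fin n) k) *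
            ((x : GL (Fin n) k) : Matrix (Fin n) (Fin n) k) := by
        rw [Units.val_mul, Units.val_mul]
      rw [← h2, hxgx, aux_charpoly_diagonal] at h1
      rw [h1, hchar]
    -- multiset equality of roots
    have hms : (Finset.univ.val.map fun i : Fin n => d i ^ m)
        = Finset.univ.val.map μ := by
      have h1 := congrArg Polynomial.roots hcp
      rw [Finset.prod_eq_multiset_prod, Finset.prod_eq_multiset_prod] at h1
      have e1 : (Multiset.map (fun i : Fin n => X - C (d i ^ m)) Finset.univ.val)
          = Multiset.map (fun a : k => X - C a)
            (Multiset.map (fun i : Fin n => d i ^ m) Finset.univ.val) := by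
        rw [Multiset.map_map]; rfl
      have e2 : (Multiset.map (fun i : Fin n => X - C (μ i)) Finset.univ.val)
          = Multiset.map (fun a : k => X - C a) (Multiset.map μ Finset.univ.val) := by
        rw [Multiset.map_map]; rfl
      rwa [e1, e2, Polynomial.roots_multiset_prod_X_sub_C,
        Polynomial.roots_multiset_prod_X_sub_C] at h1
    have hmsnodup : (Finset.univ.val.map fun i : Fin n => d i ^ m).Nodup := by
      rw [hms]
      exact Finset.univ.nodup.map hμ
    have hdinj : Function.Injective (fun i : Fin n => d i ^ m) := by
      intro a b hab
      exact Multiset.inj_on_of_nodup_map hmsnodup a (Finset.mem_univ_val a)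
        b (Finset.mem_univ_val b) hab
    -- build the permutation
    have hex : ∀ i : Fin n, ∃! j : Fin n, μ j = d i ^ m := by
      intro i
      have hmem : d i ^ m ∈ Finset.univ.val.map μ := by
        rw [← hms]
        exact Multiset.mem_map_of_mem _ (Finset.mem_univ_val i)
      obtain ⟨j, _, hj⟩ := Multiset.mem_map.mp hmem
      exact ⟨j, hj, fun j' hj' => hμ (hj'.trans hj.symm)⟩
    choose σ₀ hσ₀ hσ₀u using hex
    have hσ₀inj : Function.Injective σ₀ := by
      intro a b hab
      apply hdinj
      show d a ^ m = d b ^ m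
      rw [← hσ₀ a, ← hσ₀ b, hab]
    let σ : Equiv.Perm (Fin n) :=
      Equiv.ofBijective σ₀ (Finite.injective_iff_bijective.mp hσ₀inj)
    have hσ : ∀ i, μ (σ i) = d i ^ m := hσ₀
    let r : (i : Fin n) → {c : k // c ^ m = μ (σ i)} := fun i => ⟨d i, (hσ i).symm⟩
    refine ⟨⟨σ, r⟩, ?_⟩
    have htueq : tu σ r = (t : GL (Fin n) k) := by
      apply Units.ext
      rw [htu σ r]
      show Matrix.diagonal (fun i => d i) = Td
      rw [htdiag]
    have hcoset : ((xu σ : GL (Fin n) k) : GL (Fin n) k ⧸ diagonalSubgroup k n) = c := by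
      rw [← hx]
      rw [QuotientGroup.eq]
      -- (xu σ)⁻¹ * x ∈ diagonalSubgroup
      have hcomm : ((xu σ)⁻¹ * x) * ((xu σ)⁻¹ * g * xu σ)
          = ((xu σ)⁻¹ * g * xu σ) * ((xu σ)⁻¹ * x) := by
        have hgl : (xu σ)⁻¹ * g * xu σ = x⁻¹ * g * x := by
          apply Units.ext
          rw [hconjm σ, hxgx]
          have h : (fun i => μ (σ i)) = fun i => d i ^ m := funext fun i => hσ i
          rw [h]
        calc ((xu σ)⁻¹ * x) * ((xu σ)⁻¹ * g * xu σ)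
            = ((xu σ)⁻¹ * x) * (x⁻¹ * g * x) := by rw [hgl]
          _ = (xu σ)⁻¹ * g * x := by group
          _ = ((xu σ)⁻¹ * g * xu σ) * ((xu σ)⁻¹ * x) := by group
      have hZ : ∀ i j : Fin n, i ≠ j →
          (((xu σ)⁻¹ * x : GL (Fin n) k) : Matrix (Fin n) (Fin n) k) i j = 0 := by
        intro i j hij
        have hμσinj : Function.Injective (fun i => μ (σ i)) := hμ.comp σ.injective
        apply aux_centralizer hμσinj _ hij
        have h5 : (((xu σ)⁻¹ * x : GL (Fin n) k) : Matrix (Fin n) (Fin n) k) *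
              (((xu σ)⁻¹ * g * xu σ : GL (Fin n) k) : Matrix (Fin n) (Fin n) k)
            = (((xu σ)⁻¹ * g * xu σ : GL (Fin n) k) : Matrix (Fin n) (Fin n) k) *
              (((xu σ)⁻¹ * x : GL (Fin n) k) : Matrix (Fin n) (Fin n) k) :=
          congrArg Units.val hcomm
        rw [hconjm σ] at h5
        exact h5
      exact hZ
    apply Subtype.ext
    show ((⟨tu σ r, _⟩ : diagonalSubgroup k n),
        ((xu σ : GL (Fin n) k) : GL (Fin n) k ⧸ diagonalSubgroup k n)) = (t, c)
    rw [Prod.mk.injEq]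
    exact ⟨Subtype.ext htueq, hcoset⟩
  -- cardinality count
  rw [Nat.card_congr (Equiv.ofBijective F ⟨hFinj, hFsurj⟩).symm]
  have hfin : ∀ (σ : Equiv.Perm (Fin n)) (i : Fin n), Finite {c : k // c ^ m = μ (σ i)} := by
    intro σ i
    apply Nat.finite_of_card_ne_zero
    rw [aux_card_roots hm hminv (hμ0 (σ i))]
    omega
  haveI := hfin
  rw [aux_nat_card_sigma]
  have hfiber : ∀ σ : Equiv.Perm (Fin n),
      Nat.card ((i : Fin n) → {c : k // c ^ m = μ (σ i)}) = m ^ n := by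
    intro σ
    rw [Nat.card_pi]
    rw [Finset.prod_congr rfl (fun i _ => aux_card_roots hm hminv (hμ0 (σ i)))]
    rw [Finset.prod_const, Finset.card_univ, Fintype.card_fin]
  rw [Finset.sum_congr rfl (fun σ _ => hfiber σ)]
  rw [Finset.sum_const, Finset.card_univ, smul_eq_mul, Fintype.card_perm, Fintype.card_fin]
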